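/- Let x be a random covariate, d ∈ {0,1} a treatment indicator with propensity score p(d=1|x) ∈ (0,1), and y₁, y₀ potential outcomes with y = 1[d=1]y₁ + 1[d=0]y₀. Under unconfoundedness ({y₁,y₀} ⫫ d | x), the inverse-probability-weighted outcome ŷ = 1[d=1]y/p(d=1|x) − 1[d=0]y/(1−p(d=1|x)) satisfies E[ŷ | x] = E[y₁|x] − E[y₀|x]. -/

import Mathlib

open MeasureTheory ProbabilityTheory Set

lemma ptws {Ω : Type*} [MeasurableSpace Ω] (ν : Measure Ω) [IsProbabilityMeasure ν]
    {f : Ω → ℝ} (hf : Measurable f) {A : Set Ω} (hA : MeasurableSet A)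
    (h : ∀ q : ℚ, ν (f ⁻¹' Set.Iio (q : ℝ) ∩ A) = ν (f ⁻¹' Set.Iio (q : ℝ)) * ν A) :
    ∫ ω, A.indicator f ω ∂ν = (ν A).toReal * ∫ ω, f ω ∂ν := by
  have hmap : (ν.restrict A).map f = ν A • ν.map f := by
    haveI : IsFiniteMeasure (ν A • ν.map f) := by
      constructor
      rw [Measure.smul_apply, smul_eq_mul]
      exact ENNReal.mul_lt_top (measure_lt_top _ _) (measure_lt_top _ _)
    refine ext_of_generate_finite _ (BorelSpace.measurable_eq.trans Real.borel_eq_generateFrom_Iio_rat)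
      Real.isPiSystem_Iio_rat (fun s hs => ?_) ?_
    · obtain ⟨q, hq⟩ := Set.mem_iUnion.mp hs
      simp only [Set.mem_singleton_iff] at hq
      subst hq
      rw [Measure.map_apply hf measurableSet_Iio, Measure.restrict_apply (hf measurableSet_Iio),
        Measure.smul_apply, Measure.map_apply hf measurableSet_Iio, smul_eq_mul, h q, mul_comm]
    · rw [Measure.map_apply hf MeasurableSet.univ, Set.preimage_univ, Measure.restrict_apply_univ,
        Measure.smul_apply, Measure.map_apply hf MeasurableSet.univ, Set.preimage_univ,
        smul_eq_mul, measure_univ, mul_one]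
  rw [integral_indicator hA]
  have h1 : ∫ ω in A, f ω ∂ν = ∫ x, x ∂((ν.restrict A).map f) :=
    (integral_map hf.aemeasurable aestronglyMeasurable_id).symm
  have h2 : ∫ x, x ∂(ν.map f) = ∫ ω, f ω ∂ν :=
    integral_map hf.aemeasurable aestronglyMeasurable_id
  rw [h1, hmap, integral_smul_measure, h2, smul_eq_mul]

lemma keylem {Ω : Type*} {mX : MeasurableSpace Ω} [m0 : MeasurableSpace Ω]
    [StandardBorelSpace Ω]
    (μ : Measure Ω) [IsProbabilityMeasure μ]
    {f : Ω → ℝ} {g : Ω → Bool} (hf : Measurable f) (hg : Measurable g)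
    (hfint : Integrable f μ)
    (hle : mX ≤ m0)
    (hindep : CondIndepFun mX hle f g μ) :
    μ[(g ⁻¹' {true}).indicator f|mX] =ᵐ[μ]
      fun ω => (μ⟦g ⁻¹' {true}|mX⟧) ω * (μ[f|mX]) ω := by
  set A := g ⁻¹' {true} with hAdef
  have hA : MeasurableSet A := hg (measurableSet_singleton true)
  set κ := condExpKernel (mΩ := m0) μ mX with hκdef
  have hq : ∀ q : ℚ, ∀ᵐ ω ∂μ, κ ω (f ⁻¹' Set.Iio (q:ℝ) ∩ A)
      = κ ω (f ⁻¹' Set.Iio (q:ℝ)) * κ ω A := by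
    intro q
    exact ae_of_ae_trim hle (hindep _ _ ⟨Set.Iio (q:ℝ), measurableSet_Iio, rfl⟩
      ⟨{true}, measurableSet_singleton true, rfl⟩)
  have hq' : ∀ᵐ ω ∂μ, ∀ q : ℚ, κ ω (f ⁻¹' Set.Iio (q:ℝ) ∩ A)
      = κ ω (f ⁻¹' Set.Iio (q:ℝ)) * κ ω A := ae_all_iff.mpr hq
  have h1 : μ[A.indicator f|mX] =ᵐ[μ] fun ω => ∫ y, A.indicator f y ∂κ ω :=
    condExp_ae_eq_integral_condExpKernel hle (hfint.indicator hA)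
  have h2 : (fun ω => (κ ω A).toReal) =ᵐ[μ] μ⟦A|mX⟧ :=
    condExpKernel_ae_eq_condExp hle hA
  have h3 : μ[f|mX] =ᵐ[μ] fun ω => ∫ y, f y ∂κ ω :=
    condExp_ae_eq_integral_condExpKernel hle hfint
  filter_upwards [hq', h1, h2, h3] with ω hωq hω1 hω2 hω3
  haveI : IsProbabilityMeasure (κ ω) := inferInstance
  rw [hω1, ← hω2, hω3]
  exact ptws (κ ω) hf hA hωq

lemma mainlem {Ω : Type*} {mX : MeasurableSpace Ω} [m0 : MeasurableSpace Ω]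
    [StandardBorelSpace Ω]
    (μ : Measure Ω) [IsProbabilityMeasure μ]
    (d : Ω → Bool) (y₁ y₀ : Ω → ℝ)
    (hd : Measurable d) (hy₁ : Measurable y₁) (hy₀ : Measurable y₀)
    (hy₁int : Integrable y₁ μ) (hy₀int : Integrable y₀ μ)
    (hle : mX ≤ m0)
    (hunconf : CondIndepFun mX hle (fun ω => (y₁ ω, y₀ ω)) d μ)
    (e : Ω → ℝ)
    (he_cond : e =ᵐ[μ] μ[fun ω => if d ω then (1 : ℝ) else 0 | mX])
    (he_pos : ∀ ω, 0 < e ω) (he_lt : ∀ ω, e ω < 1)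
    (y yh : Ω → ℝ)
    (hy : y = fun ω => if d ω then y₁ ω else y₀ ω)
    (hyh : yh = fun ω =>
      (if d ω then y ω / e ω else 0) - (if d ω then 0 else y ω / (1 - e ω)))
    (hyhint : Integrable yh μ) :
    μ[yh|mX] =ᵐ[μ] μ[y₁|mX] - μ[y₀|mX] := by
  set A := d ⁻¹' {true} with hAdef
  have hA : MeasurableSet A := hd (measurableSet_singleton true)
  set eb := μ[fun ω => if d ω then (1 : ℝ) else 0|mX] with hebdef
  have hind : (fun ω => if d ω then (1 : ℝ) else 0) = A.indicator (fun _ => (1 : ℝ)) := by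
    funext ω
    by_cases h : d ω = true <;>
      simp [Set.indicator_apply, hAdef, Set.mem_preimage, h]
  have hebsm : StronglyMeasurable[mX] eb := stronglyMeasurable_condExp
  have hee : e =ᵐ[μ] eb := he_cond
  have hebne : ∀ᵐ ω ∂μ, eb ω ≠ 0 := by
    filter_upwards [hee] with ω hω
    rw [← hω]; exact (he_pos ω).ne'
  have hebne1 : ∀ᵐ ω ∂μ, (1 : ℝ) - eb ω ≠ 0 := by
    filter_upwards [hee] with ω hω
    rw [← hω]; exact (sub_pos.mpr (he_lt ω)).ne'
  have hi₁ : CondIndepFun mX hle y₁ d μ := hunconf.comp measurable_fst measurable_id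
  have hi₀ : CondIndepFun mX hle y₀ d μ := hunconf.comp measurable_snd measurable_id
  have key₁ : μ[A.indicator y₁|mX] =ᵐ[μ] fun ω => eb ω * (μ[y₁|mX]) ω := by
    have h := keylem μ hy₁ hd hy₁int hle hi₁
    rw [hebdef, hind]
    exact h
  have key₀ : μ[A.indicator y₀|mX] =ᵐ[μ] fun ω => eb ω * (μ[y₀|mX]) ω := by
    have h := keylem μ hy₀ hd hy₀int hle hi₀
    rw [hebdef, hind]
    exact h
  have hf₁int : Integrable (A.indicator y₁) μ := hy₁int.indicator hA
  have hf₀int : Integrable (Aᶜ.indicator y₀) μ := hy₀int.indicator hA.compl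
  -- the weighted pieces
  have hw₁f₁ : ((fun ω => (eb ω)⁻¹) * A.indicator y₁) =ᵐ[μ] A.indicator yh := by
    filter_upwards [hee] with ω hω
    cases hdw : d ω <;>
      · simp [hyh, hy, hAdef, Set.indicator_apply, hdw, hω]
        try ring
  have hw₂f₀ : ((fun ω => ((1 : ℝ) - eb ω)⁻¹) * Aᶜ.indicator y₀) =ᵐ[μ]
      fun ω => -(Aᶜ.indicator yh ω) := by
    filter_upwards [hee] with ω hω
    cases hdw : d ω <;>
      · simp [hyh, hy, hAdef, Set.indicator_apply, hdw, hω]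
        try ring
  have hint₁ : Integrable ((fun ω => (eb ω)⁻¹) * A.indicator y₁) μ :=
    (hyhint.indicator hA).congr hw₁f₁.symm
  have hint₂ : Integrable ((fun ω => ((1 : ℝ) - eb ω)⁻¹) * Aᶜ.indicator y₀) μ :=
    ((hyhint.indicator hA.compl).neg.congr hw₂f₀.symm)
  have hsum : yh =ᵐ[μ] ((fun ω => (eb ω)⁻¹) * A.indicator y₁)
      - ((fun ω => ((1 : ℝ) - eb ω)⁻¹) * Aᶜ.indicator y₀) := by
    filter_upwards [hee] with ω hω
    cases hdw : d ω <;>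
      · simp [hyh, hy, hAdef, Set.indicator_apply, hdw, hω]
        try ring
  have step1 : μ[yh|mX] =ᵐ[μ]
      μ[((fun ω => (eb ω)⁻¹) * A.indicator y₁)|mX]
        - μ[((fun ω => ((1 : ℝ) - eb ω)⁻¹) * Aᶜ.indicator y₀)|mX] :=
    (condExp_congr_ae hsum).trans (condExp_sub hint₁ hint₂ _)
  have step2 : μ[((fun ω => (eb ω)⁻¹) * A.indicator y₁)|mX] =ᵐ[μ] μ[y₁|mX] := by
    have h := condExp_mul_of_stronglyMeasurable_left hebsm.measurable.inv.stronglyMeasurable hint₁ hf₁int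
    refine h.trans ?_
    filter_upwards [key₁, hebne] with ω h₁ h₂
    simp only [Pi.mul_apply, h₁]
    exact inv_mul_cancel_left₀ h₂ _
  have key₀' : μ[Aᶜ.indicator y₀|mX] =ᵐ[μ] fun ω => ((1 : ℝ) - eb ω) * (μ[y₀|mX]) ω := by
    have hsplit : Aᶜ.indicator y₀ = y₀ - A.indicator y₀ := by
      funext ω
      by_cases h : ω ∈ A <;> simp [Set.indicator_apply, h]
    rw [hsplit]
    refine (condExp_sub hy₀int (hy₀int.indicator hA) _).trans ?_
    filter_upwards [key₀] with ω h₀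
    simp only [Pi.sub_apply, h₀]
    ring
  have step3 : μ[((fun ω => ((1 : ℝ) - eb ω)⁻¹) * Aᶜ.indicator y₀)|mX] =ᵐ[μ] μ[y₀|mX] := by
    have h := condExp_mul_of_stronglyMeasurable_left (measurable_const.sub hebsm.measurable).inv.stronglyMeasurable hint₂ hf₀int
    refine h.trans ?_
    filter_upwards [key₀', hebne1] with ω h₁ h₂
    simp only [Pi.mul_apply, h₁]
    exact inv_mul_cancel_left₀ h₂ _
  filter_upwards [step1, step2, step3] with ω h1 h2 h3
  simp only [Pi.sub_apply] at h1 ⊢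
  rw [h1, h2, h3]

/-- under unconfoundedness (`{y₁,y₀} ⫫ d | x`) and overlap
(`0 < e(x) < 1` for the propensity score `e(x) = P(d=1|x)`, realized as the conditional
expectation of the treatment indicator given the σ-algebra `mX` generated by `x`), the
IPW-corrected outcome `ŷ = 1[d=1]y/e(x) − 1[d=0]y/(1−e(x))` with
`y = 1[d=1]y₁ + 1[d=0]y₀` satisfies `E[ŷ|x] = E[y₁|x] − E[y₀|x]`. -/
theorem stmt0 {Ω : Type*} [m0 : MeasurableSpace Ω] [StandardBorelSpace Ω] [Nonempty Ω]
    {H : Type*} [MeasurableSpace H]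
    (μ : Measure Ω) [IsProbabilityMeasure μ]
    (x : Ω → H) (d : Ω → Bool) (y₁ y₀ : Ω → ℝ)
    (hx : Measurable x) (hd : Measurable d) (hy₁ : Measurable y₁) (hy₀ : Measurable y₀)
    (hy₁int : Integrable y₁ μ) (hy₀int : Integrable y₀ μ)
    (mX : MeasurableSpace Ω) (hmX : mX = MeasurableSpace.comap x inferInstance)
    (hle : mX ≤ m0)
    (hunconf : CondIndepFun mX hle (fun ω => (y₁ ω, y₀ ω)) d μ)
    (e : Ω → ℝ)
    (he_cond : e =ᵐ[μ] μ[fun ω => if d ω then (1 : ℝ) else 0 | mX])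
    (he_pos : ∀ ω, 0 < e ω) (he_lt : ∀ ω, e ω < 1)
    (y yh : Ω → ℝ)
    (hy : y = fun ω => if d ω then y₁ ω else y₀ ω)
    (hyh : yh = fun ω =>
      (if d ω then y ω / e ω else 0) - (if d ω then 0 else y ω / (1 - e ω)))
    (hyhint : Integrable yh μ) :
    μ[yh|mX] =ᵐ[μ] μ[y₁|mX] - μ[y₀|mX] := by
  exact mainlem (mX := mX) (m0 := m0) μ d y₁ y₀ hd hy₁ hy₀ hy₁int hy₀int hle hunconf e he_cond he_pos he_lt y yh hy hyh hyhint
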